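/- Let G be the bipartite graph whose parts are A, the set of finite 0-1 sequences, and B, the set of 0-1 sequences of length ω, with a ∈ A adjacent to b ∈ B if and only if a is an initial segment of b. Then G contains no K_{ω,ω} subgraph (any two vertices of B have only finitely many common neighbours), G contains no infinite clique, yet col(G) > ℵ₀. -/

import Mathlib

open Cardinal

universe u v

/-- A well-ordering of the vertices of `G` in which every vertex has
fewer than `μ` neighbours preceding it (a *good* well-ordering for `μ`). -/
def HasGoodOrder {V : Type u} (G : SimpleGraph V) (μ : Cardinal.{u}) : Prop :=
  ∃ r : V → V → Prop, IsWellOrder V r ∧ ∀ v : V, #{w : V | G.Adj v w ∧ r w v} < μ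

/-- The colouring number of `G`: the least cardinal `κ` admitting a
well-ordering of the vertices in which each vertex has fewer than `κ`
earlier neighbours. -/
noncomputable def col {V : Type u} (G : SimpleGraph V) : Cardinal.{u} :=
  sInf {μ : Cardinal.{u} | HasGoodOrder G μ}

/-- `X` is robust (for `μ`): every vertex outside `X` has fewer than `μ`
neighbours inside `X`. -/
def Robust {V : Type u} (G : SimpleGraph V) (μ : Cardinal.{u}) (X : Set V) : Prop :=
  ∀ v ∉ X, #(G.neighborSet v ∩ X : Set V) < μ

/-- `G` contains a `μ`-barricade as a subgraph: disjoint vertex sets `A`, `B`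
with `|A| < |B|` such that every vertex of `B` has at least `μ` neighbours in `A`. -/
def HasBarricade {V : Type u} (G : SimpleGraph V) (μ : Cardinal.{u}) : Prop :=
  ∃ A B : Set V, Disjoint A B ∧ #A < #B ∧
    ∀ b ∈ B, μ ≤ #(G.neighborSet b ∩ A : Set V)

/-- `G` contains a `μ`-obstruction of type I as a subgraph: disjoint sets `A`, `B`
with `|A| = λ ≥ μ`, `|B| = λ⁺`, every vertex of `B` having at least `μ`
neighbours in `A` and every vertex of `A` having `λ⁺` neighbours in `B`. -/
def HasTypeIObstruction {V : Type u} (G : SimpleGraph V) (μ : Cardinal.{u}) : Prop :=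
  ∃ (A B : Set V) (lam : Cardinal.{u}), Disjoint A B ∧ μ ≤ lam ∧
    #A = lam ∧ #B = Order.succ lam ∧
    (∀ b ∈ B, μ ≤ #(G.neighborSet b ∩ A : Set V)) ∧
    (∀ a ∈ A, #(G.neighborSet a ∩ B : Set V) = Order.succ lam)

/-- `G` itself is a `μ`-obstruction of type I: a bipartite graph with
bipartition `(A, B)` satisfying the type I conditions. -/
def IsTypeIObstruction {V : Type u} (G : SimpleGraph V) (μ : Cardinal.{u}) : Prop :=
  ∃ (A B : Set V) (lam : Cardinal.{u}), Disjoint A B ∧ A ∪ B = Set.univ ∧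
    (∀ a b, G.Adj a b → (a ∈ A ∧ b ∈ B) ∨ (a ∈ B ∧ b ∈ A)) ∧
    μ ≤ lam ∧ #A = lam ∧ #B = Order.succ lam ∧
    (∀ b ∈ B, μ ≤ #(G.neighborSet b ∩ A : Set V)) ∧
    (∀ a ∈ A, #(G.neighborSet a ∩ B : Set V) = Order.succ lam)

/-- `C` is closed and unbounded in the ordinal `o`. -/
def IsClubIn (C : Set Ordinal.{v}) (o : Ordinal.{v}) : Prop :=
  (∀ a < o, ∃ b ∈ C, a ≤ b ∧ b < o) ∧
  (∀ a < o, a ≠ 0 → sSup (C ∩ Set.Iio a) = a → a ∈ C)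

/-- `S` is stationary in the ordinal `o`: it meets every club subset of `o`. -/
def IsStationaryIn (S : Set Ordinal.{v}) (o : Ordinal.{v}) : Prop :=
  ∀ C : Set Ordinal.{v}, IsClubIn C o → (S ∩ C ∩ Set.Iio o).Nonempty

/-- The set `T_H` of vertices `α` (ordinals) with `cf α = cf μ`, whose set of
neighbours below `α` has order type `μ` and supremum `α`. -/
noncomputable def typeIITarget (H : SimpleGraph Ordinal.{v}) (μ : Cardinal.{v}) :
    Set Ordinal.{v} :=
  {α | α.cof = μ.ord.cof ∧
    Ordinal.type (Subrel ((· < ·) : Ordinal.{v} → Ordinal.{v} → Prop)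
      (· ∈ H.neighborSet α ∩ Set.Iio α)) = Ordinal.lift.{v + 1} μ.ord ∧
    sSup (H.neighborSet α ∩ Set.Iio α) = α}

/-- `H` is a `μ`-obstruction of type II with vertex set the regular cardinal
`κ > μ` (realised as the ordinals below `κ`): `T_H` is stationary in `κ`. -/
def IsTypeIIObstruction (H : SimpleGraph Ordinal.{v}) (μ κ : Cardinal.{v}) : Prop :=
  μ < κ ∧ κ.IsRegular ∧ (∀ a b, H.Adj a b → a < κ.ord ∧ b < κ.ord) ∧
  IsStationaryIn (typeIITarget H μ) κ.ord

/-- `G` contains a `μ`-obstruction of type II as a subgraph. -/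
def HasTypeIIObstruction {V : Type u} (G : SimpleGraph V) (μ : Cardinal.{v}) : Prop :=
  ∃ (κ : Cardinal.{v}) (H : SimpleGraph Ordinal.{v}) (f : Ordinal.{v} → V),
    Set.InjOn f (Set.Iio κ.ord) ∧ (∀ a b, H.Adj a b → G.Adj (f a) (f b)) ∧
    IsTypeIIObstruction H μ κ

/-- `G` contains a complete subgraph on `μ` vertices. -/
def HasCompleteSubgraph {V : Type u} (G : SimpleGraph V) (μ : Cardinal.{u}) : Prop :=
  ∃ S : Set V, #S = μ ∧ S.Pairwise G.Adj

/-- `G` contains an induced copy of the complete bipartite graph `K_{k,ω}`. -/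
def HasInducedKkOmega {V : Type u} (G : SimpleGraph V) (k : ℕ) : Prop :=
  ∃ A B : Set V, Disjoint A B ∧ #A = (k : Cardinal.{u}) ∧ #B = ℵ₀ ∧
    (∀ a ∈ A, ∀ b ∈ B, G.Adj a b) ∧
    (∀ a ∈ A, ∀ a' ∈ A, a ≠ a' → ¬ G.Adj a a') ∧
    (∀ b ∈ B, ∀ b' ∈ B, b ≠ b' → ¬ G.Adj b b')

/-- Vertices: finite 0-1 sequences together with 0-1 sequences of length `ω`. -/
abbrev BinTreeVert : Type := (List Bool) ⊕ (ℕ → Bool)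

/-- `a` is adjacent to `b` when the finite sequence `a` is an initial segment of
the infinite sequence `b`. -/
def binTreeGraph : SimpleGraph BinTreeVert :=
  SimpleGraph.fromRel (fun x y =>
    match x, y with
    | Sum.inl a, Sum.inr b => ∀ i : Fin a.length, a.get i = b i
    | _, _ => False)


private def pref (b : ℕ → Bool) (n : ℕ) : List Bool := List.ofFn (fun i : Fin n => b i)

private lemma adj_pref (b : ℕ → Bool) (n : ℕ) :
    binTreeGraph.Adj (Sum.inl (pref b n)) (Sum.inr b) := by
  rw [binTreeGraph, SimpleGraph.fromRel_adj]
  refine ⟨by simp, Or.inl ?_⟩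
  intro i
  simp only [List.get_eq_getElem]; exact List.getElem_ofFn ..

private lemma adj_prefix {l : List Bool} {f : ℕ → Bool}
    (h : binTreeGraph.Adj (Sum.inl l) (Sum.inr f)) :
    ∀ i : Fin l.length, l.get i = f i := by
  rw [binTreeGraph, SimpleGraph.fromRel_adj] at h
  rcases h.2 with h | h
  · exact h
  · exact h.elim

private lemma not_adj_same (x y : BinTreeVert) (h : x.isLeft = y.isLeft) :
    ¬ binTreeGraph.Adj x y := by
  intro hadj
  rw [binTreeGraph, SimpleGraph.fromRel_adj] at hadj
  rcases x with a | a <;> rcases y with b | b <;> simp_all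

private lemma core (A B : Set BinTreeVert) (hAl : A ⊆ Set.range Sum.inl)
    (hBr : B ⊆ Set.range Sum.inr)
    (hAinf : A.Infinite) (hB2 : ∃ b1 ∈ B, ∃ b2 ∈ B, b1 ≠ b2)
    (hadj : ∀ a ∈ A, ∀ b ∈ B, binTreeGraph.Adj a b) : False := by
  obtain ⟨b1, hb1, b2, hb2, hne⟩ := hB2
  obtain ⟨f1, rfl⟩ := hBr hb1
  obtain ⟨f2, rfl⟩ := hBr hb2
  have hf : f1 ≠ f2 := fun h => hne (by rw [h])
  obtain ⟨n, hn⟩ := Function.ne_iff.mp hf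
  have hA' : (Sum.inl ⁻¹' A : Set (List Bool)).Infinite := hAinf.preimage hAl
  obtain ⟨l, hl⟩ := (hA'.diff (List.finite_length_le Bool n)).nonempty
  have hlen : n < l.length := by
    have := hl.2
    simpa using this
  have h1 := adj_prefix (hadj _ hl.1 _ hb1) ⟨n, hlen⟩
  have h2 := adj_prefix (hadj _ hl.1 _ hb2) ⟨n, hlen⟩
  exact hn (h1.symm.trans h2)

private lemma no_good : ¬ HasGoodOrder binTreeGraph ℵ₀ := by
  rintro ⟨r, hwo, hr⟩
  have hfin : ∀ v, {w | binTreeGraph.Adj v w ∧ r w v}.Finite :=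
    fun v => Cardinal.lt_aleph0_iff_set_finite.mp (hr v)
  have step1 : ∀ b : ℕ → Bool, ∃ n : ℕ, r (Sum.inr b) (Sum.inl (pref b n)) := by
    intro b
    by_contra h
    push_neg at h
    have hall : ∀ n, r (Sum.inl (pref b n)) (Sum.inr b) := by
      intro n
      rcases (by by_contra hc; push_neg at hc; exact hc.2.1 (hwo.trichotomous _ _ hc.1 hc.2.2) : r (Sum.inl (pref b n)) (Sum.inr b) ∨ Sum.inl (pref b n) = Sum.inr b ∨ r (Sum.inr b) (Sum.inl (pref b n))) with h1 | h1 | h1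
      · exact h1
      · exact absurd h1 (by simp)
      · exact absurd h1 (h n)
    have hinf : {w | binTreeGraph.Adj (Sum.inr b) w ∧ r w (Sum.inr b)}.Infinite := by
      apply Set.infinite_of_injective_forall_mem (f := fun n : ℕ => Sum.inl (pref b n))
      · intro m k hmk
        have := Sum.inl.inj hmk
        have := congrArg List.length this
        simpa [pref] using this
      · exact fun n => ⟨(adj_pref b n).symm, hall n⟩
    exact hinf (hfin _)
  have cover : (Set.univ : Set (ℕ → Bool)) ⊆
      ⋃ l : List Bool, (Sum.inr ⁻¹' {w | binTreeGraph.Adj (Sum.inl l) w ∧ r w (Sum.inl l)}) := by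
    intro b _
    obtain ⟨n, hn⟩ := step1 b
    exact Set.mem_iUnion.mpr ⟨pref b n, adj_pref b n, hn⟩
  have hcnt : (Set.univ : Set (ℕ → Bool)).Countable :=
    Set.Countable.mono cover
      (Set.countable_iUnion fun l => ((hfin _).preimage Sum.inr_injective.injOn).countable)
  have : Countable (ℕ → Bool) := Set.countable_univ_iff.mp hcnt
  have h1 : #(ℕ → Bool) ≤ ℵ₀ := Cardinal.mk_le_aleph0
  have h2 : #(ℕ → Bool) = 2 ^ ℵ₀ := by rw [Cardinal.mk_arrow]; simp
  rw [h2] at h1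
  exact absurd h1 (not_le.mpr (Cardinal.cantor ℵ₀))

/-- the binary tree graph contains no `K_{ω,ω}` subgraph and no
countably infinite clique, yet has colouring number `> ℵ₀`. -/
theorem stmt16 :
    (¬ ∃ A B : Set BinTreeVert, Disjoint A B ∧ #A = ℵ₀ ∧ #B = ℵ₀ ∧
        ∀ a ∈ A, ∀ b ∈ B, binTreeGraph.Adj a b) ∧
    (¬ ∃ S : Set BinTreeVert, #S = ℵ₀ ∧ S.Pairwise binTreeGraph.Adj) ∧
    ℵ₀ < col binTreeGraph := by
  refine ⟨?_, ?_, ?_⟩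
  · rintro ⟨A, B, hd, hA, hB, hadj⟩
    have hAinf : A.Infinite := Set.infinite_coe_iff.mp (Cardinal.infinite_iff.mpr hA.ge)
    have hBinf : B.Infinite := Set.infinite_coe_iff.mp (Cardinal.infinite_iff.mpr hB.ge)
    obtain ⟨a0, ha0⟩ := hAinf.nonempty
    obtain ⟨b0, hb0⟩ := hBinf.nonempty
    have two : ∀ s : Set BinTreeVert, s.Infinite → ∃ x ∈ s, ∃ y ∈ s, x ≠ y := by
      intro s hs
      obtain ⟨x, hx, y, hy, hxy⟩ := hs.nontrivial
      exact ⟨x, hx, y, hy, hxy⟩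
    rcases a0 with l | g
    · have hBr : B ⊆ Set.range Sum.inr := by
        intro b hb
        rcases b with b' | b'
        · exact absurd (hadj _ ha0 _ hb) (not_adj_same _ _ rfl)
        · exact ⟨b', rfl⟩
      obtain ⟨g0, rfl⟩ := hBr hb0
      have hAl : A ⊆ Set.range Sum.inl := by
        intro a ha
        rcases a with a' | a'
        · exact ⟨a', rfl⟩
        · exact absurd (hadj _ ha _ hb0) (not_adj_same _ _ rfl)
      exact core A B hAl hBr hAinf (two B hBinf) hadj
    · have hBl : B ⊆ Set.range Sum.inl := by
        intro b hb
        rcases b with b' | b'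
        · exact ⟨b', rfl⟩
        · exact absurd (hadj _ ha0 _ hb) (not_adj_same _ _ rfl)
      obtain ⟨l0, rfl⟩ := hBl hb0
      have hAr : A ⊆ Set.range Sum.inr := by
        intro a ha
        rcases a with a' | a'
        · exact absurd (hadj _ ha _ hb0) (not_adj_same _ _ rfl)
        · exact ⟨a', rfl⟩
      exact core B A hBl hAr hBinf (two A hAinf)
        (fun b hb a ha => (hadj a ha b hb).symm)
  · rintro ⟨S, hS, hpair⟩
    have hinf : S.Infinite := Set.infinite_coe_iff.mp (Cardinal.infinite_iff.mpr hS.ge)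
    obtain ⟨x, hx, y, hy, hxy, hside⟩ :=
      hinf.exists_ne_map_eq_of_mapsTo (f := Sum.isLeft)
        (Set.mapsTo_univ _ _) Set.finite_univ
    exact not_adj_same x y hside (hpair hx hy hxy)
  · have hne : {μ : Cardinal | HasGoodOrder binTreeGraph μ}.Nonempty := by
      refine ⟨Order.succ #BinTreeVert, WellOrderingRel, inferInstance, fun v => ?_⟩
      exact (Cardinal.mk_subtype_le _).trans_lt (Order.lt_succ _)
    have hmem : HasGoodOrder binTreeGraph (col binTreeGraph) := csInf_mem hne
    by_contra hle
    push_neg at hle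
    apply no_good
    obtain ⟨r, hwo, hr⟩ := hmem
    exact ⟨r, hwo, fun v => (hr v).trans_le hle⟩
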